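/- The function (Σ₁, Σ₂) ↦ −2 Trace((Σ₁^{1/2} Σ₂ Σ₁^{1/2})^{1/2}) is jointly convex on pairs of positive definite symmetric d×d matrices. -/

import Mathlib

open Matrix

open Classical in
noncomputable def msqrt {d : ℕ} (A : Matrix (Fin d) (Fin d) ℝ) : Matrix (Fin d) (Fin d) ℝ :=
  if h : A.PosSemidef then
    (h.1.eigenvectorUnitary : Matrix (Fin d) (Fin d) ℝ) *
      diagonal ((↑) ∘ (√·) ∘ h.1.eigenvalues) *
      (star h.1.eigenvectorUnitary : Matrix (Fin d) (Fin d) ℝ)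
  else 0

section Aux

variable {d : ℕ}

local notation "Mat" => Matrix (Fin d) (Fin d) ℝ

lemma msqrt_eq {A : Mat} (h : A.PosSemidef) : msqrt A =
    (h.1.eigenvectorUnitary : Mat) * diagonal ((↑) ∘ (√·) ∘ h.1.eigenvalues) *
      (star h.1.eigenvectorUnitary : Mat) := dif_pos h

lemma msqrt_psd {A : Mat} (h : A.PosSemidef) : (msqrt A).PosSemidef := by
  rw [msqrt_eq h]
  have hD : (diagonal ((↑) ∘ (√·) ∘ h.1.eigenvalues) : Mat).PosSemidef :=
    PosSemidef.diagonal fun i => by simp [Real.sqrt_nonneg]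
  have := hD.mul_mul_conjTranspose_same (h.1.eigenvectorUnitary : Mat)
  rwa [star_eq_conjTranspose]

lemma msqrt_mul_self {A : Mat} (h : A.PosSemidef) : msqrt A * msqrt A = A := by
  rw [msqrt_eq h]
  conv_rhs => rw [h.1.spectral_theorem, Unitary.conjStarAlgAut_apply]
  have hu : star (h.1.eigenvectorUnitary : Mat) * h.1.eigenvectorUnitary = 1 :=
    Unitary.star_mul_self_of_mem h.1.eigenvectorUnitary.2
  have hDD : (diagonal ((↑) ∘ (√·) ∘ h.1.eigenvalues) : Mat) *
      diagonal ((↑) ∘ (√·) ∘ h.1.eigenvalues) = diagonal (RCLike.ofReal ∘ h.1.eigenvalues) := by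
    rw [diagonal_mul_diagonal]
    congr 1
    funext i
    simp [Real.mul_self_sqrt (h.eigenvalues_nonneg i)]
  rw [← hDD]
  simp only [Matrix.mul_assoc]
  rw [← Matrix.mul_assoc (star _ : Mat) (_ : Mat), hu, Matrix.one_mul]

lemma psd_trace_nonneg {A : Mat} (hA : A.PosSemidef) : 0 ≤ A.trace := by
  rw [Matrix.trace]
  refine Finset.sum_nonneg fun i _ => ?_
  have := hA.dotProduct_mulVec_nonneg (Pi.single i 1)
  simpa [Matrix.mulVec_single, dotProduct, Pi.single_apply, ite_mul, Finset.sum_ite_eq, Finset.sum_ite_eq'] using this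

lemma trace_mul_psd_nonneg {A B : Mat} (hA : A.PosSemidef) (hB : B.PosSemidef) :
    0 ≤ (A * B).trace := by
  have hS := msqrt_psd hB
  rw [← msqrt_mul_self hB, ← Matrix.mul_assoc, Matrix.trace_mul_comm, ← Matrix.mul_assoc]
  have := hA.conjTranspose_mul_mul_same (msqrt B)
  rw [hS.1.eq] at this
  exact psd_trace_nonneg this

lemma posDef_of_psd_isUnit {A : Mat} (hA : A.PosSemidef) (hu : IsUnit A) : A.PosDef := by
  refine PosDef.of_dotProduct_mulVec_pos hA.1 fun x hx => ?_
  rcases (hA.dotProduct_mulVec_nonneg x).lt_or_eq with h | h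
  · exact h
  · exfalso
    have h0 : A *ᵥ x = 0 := (hA.dotProduct_mulVec_zero_iff x).mp h.symm
    have := (Matrix.mulVec_injective_iff_isUnit.mpr hu)
    exact hx (this (by simpa using h0))

lemma posDef_conj {A : Mat} (hA : A.PosDef) {C : Mat} (hC : IsUnit C) :
    (Cᴴ * A * C).PosDef := by
  refine PosDef.of_dotProduct_mulVec_pos (Matrix.isHermitian_conjTranspose_mul_mul C hA.1) fun x hx => ?_
  have h1 : C *ᵥ x ≠ 0 := by
    intro h
    exact hx ((Matrix.mulVec_injective_iff_isUnit.mpr hC) (by simpa using h))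
  simpa only [star_mulVec, dotProduct_mulVec, vecMul_vecMul] using hA.dotProduct_mulVec_pos h1

lemma msqrt_posDef {A : Mat} (hA : A.PosDef) : (msqrt A).PosDef := by
  have hs := msqrt_psd hA.posSemidef
  refine posDef_of_psd_isUnit hs ?_
  have hdet : IsUnit ((msqrt A).det * (msqrt A).det) := by
    rw [← Matrix.det_mul, msqrt_mul_self hA.posSemidef]
    exact hA.det_pos.ne'.isUnit
  exact (Matrix.isUnit_iff_isUnit_det _).mpr (isUnit_of_mul_isUnit_left hdet)

lemma posDef_smul {A : Mat} (hA : A.PosDef) {c : ℝ} (hc : 0 < c) : (c • A).PosDef := by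
  have hherm : (c • A).IsHermitian := by
    show (c • A)ᴴ = c • A
    rw [Matrix.conjTranspose_smul, star_trivial, hA.1.eq]
  refine PosDef.of_dotProduct_mulVec_pos hherm fun x hx => ?_
  rw [Matrix.smul_mulVec, dotProduct_smul, smul_eq_mul]
  exact mul_pos hc (hA.dotProduct_mulVec_pos hx)

lemma posDef_combo {A B : Mat} (hA : A.PosDef) (hB : B.PosDef) {a b : ℝ}
    (ha : 0 ≤ a) (hb : 0 ≤ b) (hab : a + b = 1) : (a • A + b • B).PosDef := by
  rcases ha.lt_or_eq with ha' | rfl'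
  · rcases hb.lt_or_eq with hb' | rfl'
    · exact (posDef_smul hA ha').add (posDef_smul hB hb')
    · have : b = 0 := rfl'.symm
      subst this
      simpa [show a = 1 by linarith] using hA
  · have : a = 0 := rfl'.symm
    subst this
    simpa [show b = 1 by linarith] using hB


lemma exists_optimal {A B : Mat} (hA : A.PosDef) (hB : B.PosDef) :
    ∃ X : Mat, X.PosDef ∧
      (A * X).trace = (msqrt (msqrt A * B * msqrt A)).trace ∧
      (B * X⁻¹).trace = (msqrt (msqrt A * B * msqrt A)).trace ∧
      X * (A * X) = B := by
  set C := msqrt A with hCdef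
  have hC : C.PosDef := msqrt_posDef hA
  have hCC : C * C = A := msqrt_mul_self hA.posSemidef
  have hN : (C * B * C).PosDef := by
    have := posDef_conj hB hC.isUnit
    rwa [hC.1.eq] at this
  set M := msqrt (C * B * C) with hMdef
  have hM : M.PosDef := msqrt_posDef hN
  have hMM : M * M = C * B * C := msqrt_mul_self hN.posSemidef
  letI := hC.isUnit.invertible
  letI := hM.isUnit.invertible
  have hXinv : (C⁻¹ * M * C⁻¹)⁻¹ = C * M⁻¹ * C := by
    apply Matrix.inv_eq_right_inv
    simp only [Matrix.mul_assoc, Matrix.inv_mul_cancel_left_of_invertible,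
      Matrix.mul_inv_cancel_left_of_invertible, Matrix.inv_mul_of_invertible]
  refine ⟨C⁻¹ * M * C⁻¹, ?_, ?_, ?_, ?_⟩
  · have h := posDef_conj hM hC.inv.isUnit
    rwa [Matrix.conjTranspose_nonsing_inv, hC.1.eq] at h
  · -- Tr(A X₀) = Tr M
    rw [← hCC, Matrix.trace_mul_comm]
    simp only [Matrix.mul_assoc, Matrix.inv_mul_cancel_left_of_invertible]
    rw [Matrix.trace_mul_comm, Matrix.mul_assoc, Matrix.mul_inv_of_invertible, Matrix.mul_one]
  · -- Tr(B X₀⁻¹) = Tr M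
    rw [hXinv]
    rw [show B * (C * M⁻¹ * C) = (B * C * M⁻¹) * C by simp only [Matrix.mul_assoc],
      Matrix.trace_mul_comm,
      show C * (B * C * M⁻¹) = (C * B * C) * M⁻¹ by simp only [Matrix.mul_assoc],
      ← hMM, Matrix.mul_inv_cancel_right_of_invertible]
  · -- X₀ A X₀ = B
    rw [← hCC]
    simp only [Matrix.mul_assoc, Matrix.inv_mul_cancel_left_of_invertible,
      Matrix.mul_inv_cancel_left_of_invertible]
    rw [show C⁻¹ * (M * (M * C⁻¹)) = C⁻¹ * (M * M) * C⁻¹ by simp only [Matrix.mul_assoc], hMM]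
    simp only [Matrix.mul_assoc, Matrix.inv_mul_cancel_left_of_invertible,
      Matrix.mul_inv_of_invertible, Matrix.mul_one]

lemma two_trace_le {A B X : Mat} (hA : A.PosDef) (hB : B.PosDef) (hX : X.PosDef) :
    2 * (msqrt (msqrt A * B * msqrt A)).trace ≤ (A * X).trace + (B * X⁻¹).trace := by
  obtain ⟨Y, hY, h1, h2, h3⟩ := exists_optimal hA hB
  letI := hX.isUnit.invertible
  have hH : (X - Y)ᴴ = X - Y := by rw [Matrix.conjTranspose_sub, hX.1.eq, hY.1.eq]
  have hpsd : ((X - Y) * A * (X - Y)).PosSemidef := by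
    have := hA.posSemidef.conjTranspose_mul_mul_same (X - Y)
    rwa [hH] at this
  have hnn : 0 ≤ ((X - Y) * A * (X - Y) * X⁻¹).trace :=
    trace_mul_psd_nonneg hpsd hX.inv.posSemidef
  have e1 : ((X - Y) * A * (X - Y) * X⁻¹).trace
      = (X * (A * (X * X⁻¹))).trace - (X * (A * (Y * X⁻¹))).trace
        - ((Y * (A * (X * X⁻¹))).trace - (Y * (A * (Y * X⁻¹))).trace) := by
    simp only [Matrix.sub_mul, Matrix.mul_sub, Matrix.mul_assoc, Matrix.trace_sub]
    ring
  have t1 : (X * (A * (X * X⁻¹))).trace = (A * X).trace := by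
    rw [Matrix.mul_inv_of_invertible, Matrix.mul_one, Matrix.trace_mul_comm]
  have t2 : (X * (A * (Y * X⁻¹))).trace = (msqrt (msqrt A * B * msqrt A)).trace := by
    rw [Matrix.trace_mul_comm, Matrix.mul_assoc, Matrix.mul_assoc,
      Matrix.inv_mul_of_invertible, Matrix.mul_one, ← h1]
  have t3 : (Y * (A * (X * X⁻¹))).trace = (msqrt (msqrt A * B * msqrt A)).trace := by
    rw [Matrix.mul_inv_of_invertible, Matrix.mul_one, Matrix.trace_mul_comm, ← h1]
  have t4 : (Y * (A * (Y * X⁻¹))).trace = (B * X⁻¹).trace := by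
    rw [show Y * (A * (Y * X⁻¹)) = (Y * (A * Y)) * X⁻¹ by simp only [Matrix.mul_assoc], h3]
  rw [e1, t1, t2, t3, t4] at hnn
  linarith

theorem bures_cross_term_jointly_convex' :
    ConvexOn ℝ
      {p : Matrix (Fin d) (Fin d) ℝ × Matrix (Fin d) (Fin d) ℝ |
        p.1.PosDef ∧ p.2.PosDef}
      (fun p => -2 * (msqrt (msqrt p.1 * p.2 * msqrt p.1)).trace) := by
  constructor
  · rintro ⟨A₁, B₁⟩ ⟨hA₁, hB₁⟩ ⟨A₂, B₂⟩ ⟨hA₂, hB₂⟩ a b ha hb hab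
    exact ⟨posDef_combo hA₁ hA₂ ha hb hab, posDef_combo hB₁ hB₂ ha hb hab⟩
  · rintro ⟨A₁, B₁⟩ ⟨hA₁, hB₁⟩ ⟨A₂, B₂⟩ ⟨hA₂, hB₂⟩ a b ha hb hab
    simp only [Prod.smul_mk, Prod.mk_add_mk, smul_eq_mul]
    set A : Mat := a • A₁ + b • A₂ with hAdef
    set B : Mat := a • B₁ + b • B₂ with hBdef
    have hA : A.PosDef := posDef_combo hA₁ hA₂ ha hb hab
    have hB : B.PosDef := posDef_combo hB₁ hB₂ ha hb hab
    obtain ⟨Y, hY, h1, h2, -⟩ := exists_optimal hA hB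
    have eA : (A * Y).trace = a * (A₁ * Y).trace + b * (A₂ * Y).trace := by
      rw [hAdef, Matrix.add_mul, Matrix.smul_mul, Matrix.smul_mul, Matrix.trace_add,
        Matrix.trace_smul, Matrix.trace_smul, smul_eq_mul, smul_eq_mul]
    have eB : (B * Y⁻¹).trace = a * (B₁ * Y⁻¹).trace + b * (B₂ * Y⁻¹).trace := by
      rw [hBdef, Matrix.add_mul, Matrix.smul_mul, Matrix.smul_mul, Matrix.trace_add,
        Matrix.trace_smul, Matrix.trace_smul, smul_eq_mul, smul_eq_mul]
    have i1 := two_trace_le hA₁ hB₁ hY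
    have i2 := two_trace_le hA₂ hB₂ hY
    have j1 := mul_le_mul_of_nonneg_left i1 ha
    have j2 := mul_le_mul_of_nonneg_left i2 hb
    nlinarith [h1, h2, eA, eB, j1, j2]

end Aux

/-- `(Σ₁, Σ₂) ↦ −2 Tr((Σ₁^{1/2} Σ₂ Σ₁^{1/2})^{1/2})` is jointly convex on pairs of
positive definite matrices. -/
theorem bures_cross_term_jointly_convex {d : ℕ} :
    ConvexOn ℝ
      {p : Matrix (Fin d) (Fin d) ℝ × Matrix (Fin d) (Fin d) ℝ |
        p.1.PosDef ∧ p.2.PosDef}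
      (fun p => -2 * (msqrt (msqrt p.1 * p.2 * msqrt p.1)).trace) := by
  exact bures_cross_term_jointly_convex'
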